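/- In the 8-dimensional Lie algebra h̄_b with basis f_0,…,f_7 and brackets [f_0,f_i]=f_{i+1} (1≤i≤6), [f_1,f_2]=(1/10)f_5−(27/100)b f_6+(1+(5143/7000)b²)f_7, [f_1,f_3]=(1/10)f_6−(27/100)b f_7, [f_1,f_4]=(3/35)f_7, [f_2,f_3]=(1/70)f_7, every derivation D satisfies: writing D f_j = Σ_k m_{k+1,j+1} f_k, the diagonal entries obey m_{i+1,i+1} = (i+2) m_{1,1} for 1 ≤ i ≤ 7. -/

import Mathlib

open scoped BigOperators

/-- Structure constants of the 8-dimensional Lie algebra `h̄_b`: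
`hbarSC b i j k` is the coefficient of `f_k` in `⁅f_i, f_j⁆` for `i < j`
(and `0` otherwise; the full antisymmetric constants are obtained below). -/
noncomputable def hbarSC (b : ℂ) : ℕ → ℕ → ℕ → ℂ
  | 0, j, k => if 1 ≤ j ∧ j ≤ 6 ∧ k = j + 1 then 1 else 0
  | 1, 2, 5 => 1/10
  | 1, 2, 6 => -(27/100) * b
  | 1, 2, 7 => 1 + (5143/7000) * b^2
  | 1, 3, 6 => 1/10
  | 1, 3, 7 => -(27/100) * b
  | 1, 4, 7 => 3/35
  | 2, 3, 7 => 1/70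
  | _, _, _ => 0

/-- The full (antisymmetrized) structure constants of `h̄_b`. -/
noncomputable def hbarC (b : ℂ) (i j k : Fin 8) : ℂ :=
  hbarSC b i j k - hbarSC b j i k

private lemma fvv0 : ((0:Fin 8):ℕ) = 0 := rfl
private lemma fvv1 : ((1:Fin 8):ℕ) = 1 := rfl
private lemma fvv2 : ((2:Fin 8):ℕ) = 2 := rfl
private lemma fvv3 : ((3:Fin 8):ℕ) = 3 := rfl
private lemma fvv4 : ((4:Fin 8):ℕ) = 4 := rfl
private lemma fvv5 : ((5:Fin 8):ℕ) = 5 := rfl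
private lemma fvv6 : ((6:Fin 8):ℕ) = 6 := rfl
private lemma fvv7 : ((7:Fin 8):ℕ) = 7 := rfl

set_option maxHeartbeats 2000000 in
/-- For every derivation `D` of `h̄_b`, writing `m_{k+1,j+1}` for the coefficient of `f_k`
in `D f_j`, the diagonal entries satisfy `m_{i+1,i+1} = (i+2) m_{1,1}` for `1 ≤ i ≤ 7`. -/
theorem hbar_derivation_diagonal
    (b : ℂ) (L : Type*) [LieRing L] [LieAlgebra ℂ L]
    (B : Module.Basis (Fin 8) ℂ L)
    (hB : ∀ i j : Fin 8, ⁅B i, B j⁆ = ∑ k : Fin 8, hbarC b i j k • B k)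
    (D : LieDerivation ℂ L L) :
    ∀ i : Fin 8, 1 ≤ (i : ℕ) →
      B.repr (D (B i)) i = ((i : ℕ) + 2 : ℂ) * B.repr (D (B 0)) 0 := by
  have key : ∀ i j k : Fin 8,
      (∑ l : Fin 8, (B.repr (D (B i)) l * hbarC b l j k
        + B.repr (D (B j)) l * hbarC b i l k))
      = ∑ l : Fin 8, hbarC b i j l * B.repr (D (B l)) k := by
    intro i j k
    have hrep' : ∀ (x : L) (i k : Fin 8), B.repr ⁅B i, x⁆ k = ∑ l : Fin 8, B.repr x l * hbarC b i l k := by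
      intro x i k
      have hbr : ⁅B i, x⁆ = ∑ l : Fin 8, B.repr x l • ⁅B i, B l⁆ := by
        have h0 : ⁅B i, x⁆ = LieModule.toEnd ℂ L L (B i) x := rfl
        rw [h0]
        conv_lhs => rw [← B.sum_repr x]
        rw [map_sum]
        simp [LieModule.toEnd_apply_apply]
      rw [hbr]
      simp only [hB, Finset.smul_sum, map_sum, map_smul, B.repr_self,
        Finsupp.coe_finset_sum, Finsupp.coe_smul, Finset.sum_apply, Pi.smul_apply,
        Finsupp.single_apply, smul_ite, smul_zero, smul_eq_mul]
      rw [Finset.sum_comm]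
      simp [Finset.sum_ite_eq', mul_comm]
    have hrep : ∀ (x : L) (j k : Fin 8), B.repr ⁅x, B j⁆ k = ∑ l : Fin 8, B.repr x l * hbarC b l j k := by
      intro x j k
      rw [← lie_skew, map_neg, Finsupp.neg_apply, hrep']
      have hs : ∀ l : Fin 8, hbarC b l j k = - hbarC b j l k := by
        intro l; simp only [hbarC]; ring
      rw [← Finset.sum_neg_distrib]
      exact Finset.sum_congr rfl fun l _ => by rw [hs l]; ring
    have h1 : D ⁅B i, B j⁆ = ⁅B i, D (B j)⁆ + ⁅D (B i), B j⁆ := D.apply_lie_eq_add (B i) (B j)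
    have h2 := congrArg (fun x => B.repr x k) h1
    simp only [map_add, Finsupp.add_apply] at h2
    rw [hrep _ j k, hrep' _ i k] at h2
    have h3 : B.repr (D ⁅B i, B j⁆) k = ∑ l : Fin 8, hbarC b i j l * B.repr (D (B l)) k := by
      rw [hB]
      simp [map_sum, map_smul, Finset.sum_apply]
    rw [h3] at h2
    rw [Finset.sum_add_distrib, h2, add_comm]
  have E012 := key 0 1 2
  have E021 := key 0 2 1
  have E023 := key 0 2 3
  have E032 := key 0 3 2
  have E034 := key 0 3 4
  have E043 := key 0 4 3
  have E045 := key 0 4 5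
  have E054 := key 0 5 4
  have E056 := key 0 5 6
  have E065 := key 0 6 5
  have E066 := key 0 6 6
  have E067 := key 0 6 7
  have E077 := key 0 7 7
  have E125 := key 1 2 5
  simp only [Fin.sum_univ_eight] at E012 E021 E023 E032 E034 E043 E045 E054 E056 E065 E066 E067 E077 E125
  norm_num [hbarC, hbarSC, fvv0, fvv1, fvv2, fvv3, fvv4, fvv5, fvv6, fvv7] at E012 E021 E023 E032 E034 E043 E045 E054 E056 E065 E066 E067 E077 E125
  have g1 : B.repr (D (B 1)) 1 = (((1:ℕ):ℂ) + 2) * B.repr (D (B 0)) 0 := by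
    linear_combination ((-10) + (-5143/700)*b^2) * E021 + ((-1)) * E023 + ((-10) + (-5143/700)*b^2) * E032 + ((-1)) * E034 + ((-10) + (-5143/700)*b^2) * E043 + ((-1)) * E045 + ((-10) + (-5143/700)*b^2) * E054 + ((-10) + (-5143/700)*b^2) * E065 + ((-27/10)*b) * E066 + ((-27/10)*b) * E077 + ((10)) * E125
  have g2 : B.repr (D (B 2)) 2 = (((2:ℕ):ℂ) + 2) * B.repr (D (B 0)) 0 := by
    linear_combination ((-1)) * E012 + ((-10) + (-5143/700)*b^2) * E021 + ((-1)) * E023 + ((-10) + (-5143/700)*b^2) * E032 + ((-1)) * E034 + ((-10) + (-5143/700)*b^2) * E043 + ((-1)) * E045 + ((-10) + (-5143/700)*b^2) * E054 + ((-10) + (-5143/700)*b^2) * E065 + ((-27/10)*b) * E066 + ((-27/10)*b) * E077 + ((10)) * E125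
  have g3 : B.repr (D (B 3)) 3 = (((3:ℕ):ℂ) + 2) * B.repr (D (B 0)) 0 := by
    linear_combination ((-1)) * E012 + ((-10) + (-5143/700)*b^2) * E021 + ((-2)) * E023 + ((-10) + (-5143/700)*b^2) * E032 + ((-1)) * E034 + ((-10) + (-5143/700)*b^2) * E043 + ((-1)) * E045 + ((-10) + (-5143/700)*b^2) * E054 + ((-10) + (-5143/700)*b^2) * E065 + ((-27/10)*b) * E066 + ((-27/10)*b) * E077 + ((10)) * E125
  have g4 : B.repr (D (B 4)) 4 = (((4:ℕ):ℂ) + 2) * B.repr (D (B 0)) 0 := by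
    linear_combination ((-1)) * E012 + ((-10) + (-5143/700)*b^2) * E021 + ((-2)) * E023 + ((-10) + (-5143/700)*b^2) * E032 + ((-2)) * E034 + ((-10) + (-5143/700)*b^2) * E043 + ((-1)) * E045 + ((-10) + (-5143/700)*b^2) * E054 + ((-10) + (-5143/700)*b^2) * E065 + ((-27/10)*b) * E066 + ((-27/10)*b) * E077 + ((10)) * E125
  have g5 : B.repr (D (B 5)) 5 = (((5:ℕ):ℂ) + 2) * B.repr (D (B 0)) 0 := by
    linear_combination ((-1)) * E012 + ((-10) + (-5143/700)*b^2) * E021 + ((-2)) * E023 + ((-10) + (-5143/700)*b^2) * E032 + ((-2)) * E034 + ((-10) + (-5143/700)*b^2) * E043 + ((-2)) * E045 + ((-10) + (-5143/700)*b^2) * E054 + ((-10) + (-5143/700)*b^2) * E065 + ((-27/10)*b) * E066 + ((-27/10)*b) * E077 + ((10)) * E125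
  have g6 : B.repr (D (B 6)) 6 = (((6:ℕ):ℂ) + 2) * B.repr (D (B 0)) 0 := by
    linear_combination ((-1)) * E012 + ((-10) + (-5143/700)*b^2) * E021 + ((-2)) * E023 + ((-10) + (-5143/700)*b^2) * E032 + ((-2)) * E034 + ((-10) + (-5143/700)*b^2) * E043 + ((-2)) * E045 + ((-10) + (-5143/700)*b^2) * E054 + ((-1)) * E056 + ((-10) + (-5143/700)*b^2) * E065 + ((-27/10)*b) * E066 + ((-27/10)*b) * E077 + ((10)) * E125
  have g7 : B.repr (D (B 7)) 7 = (((7:ℕ):ℂ) + 2) * B.repr (D (B 0)) 0 := by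
    linear_combination ((-1)) * E012 + ((-10) + (-5143/700)*b^2) * E021 + ((-2)) * E023 + ((-10) + (-5143/700)*b^2) * E032 + ((-2)) * E034 + ((-10) + (-5143/700)*b^2) * E043 + ((-2)) * E045 + ((-10) + (-5143/700)*b^2) * E054 + ((-1)) * E056 + ((-10) + (-5143/700)*b^2) * E065 + ((-27/10)*b) * E066 + ((-1)) * E067 + ((-27/10)*b) * E077 + ((10)) * E125
  intro i hi
  fin_cases i
  · exact absurd hi (by norm_num)
  · exact g1
  · exact g2
  · exact g3
  · exact g4
  · exact g5
  · exact g6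
  · exact g7
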